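/- Let L > 0 and define the ISTA map T(x) = ST(x + (1/L)Aᵀ(y − Ax), λ/L). Then x̂ ∈ ℝ^n is a fixed point of T (i.e., T(x̂) = x̂) if and only if x̂ is a global minimizer of the Lasso objective P. -/

import Mathlib

/-- The soft-thresholding operator, defined componentwise by
`ST(v,θ)_i = sign(v_i) · max(|v_i| − θ, 0)`. -/
noncomputable def softThreshold {n : ℕ} (v : Fin n → ℝ) (θ : ℝ) : Fin n → ℝ :=
  fun i => Real.sign (v i) * max (|v i| - θ) 0

/-- The Lasso objective `P(x) = (1/2)‖y − Ax‖₂² + λ‖x‖₁`. -/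
noncomputable def lassoObj {m n : ℕ} (A : Matrix (Fin m) (Fin n) ℝ) (y : Fin m → ℝ)
    (lam : ℝ) (x : Fin n → ℝ) : ℝ :=
  (1 / 2) * ∑ i, (y i - A.mulVec x i) ^ 2 + lam * ∑ i, |x i|

/-- The ISTA map `T(x) = ST(x + (1/L)Aᵀ(y − Ax), λ/L)`. -/
noncomputable def istaMap {m n : ℕ} (A : Matrix (Fin m) (Fin n) ℝ) (y : Fin m → ℝ)
    (lam L : ℝ) (x : Fin n → ℝ) : Fin n → ℝ :=
  softThreshold (x + (1 / L) • A.transpose.mulVec (y - A.mulVec x)) (lam / L)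

/-- Scalar characterization: fixed point of soft-thresholding ↔ subgradient inequality. -/
lemma st_scalar (x g lam L : ℝ) (hlam : 0 ≤ lam) (hL : 0 < L) :
    Real.sign (x - g / L) * max (|x - g / L| - lam / L) 0 = x ↔
      ∀ t : ℝ, 0 ≤ g * (t - x) + lam * |t| - lam * |x| := by
  have hL' : L ≠ 0 := ne_of_gt hL
  constructor
  · intro h t
    rcases lt_trichotomy x 0 with hx | hx | hx
    · -- x < 0 : derive g = lam
      rcases lt_trichotomy (x - g / L) 0 with hc | hc | hc
      · rw [Real.sign_of_neg hc, abs_of_neg hc] at h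
        have hmax : max (-(x - g / L) - lam / L) 0 = -x := by linarith [h]
        have h0 : -(x - g / L) - lam / L = -x := by
          rcases le_or_gt (-(x - g / L) - lam / L) 0 with h' | h'
          · rw [max_eq_right h'] at hmax; linarith
          · rw [max_eq_left (le_of_lt h')] at hmax; exact hmax
        have hg : g = lam := by field_simp at h0; linarith
        rw [hg, abs_of_neg hx]
        nlinarith [neg_abs_le t, abs_nonneg t]
      · rw [hc, Real.sign_zero, zero_mul] at h; linarith
      · rw [Real.sign_of_pos hc] at h
        have := le_max_right (|x - g / L| - lam / L) 0
        linarith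
    · -- x = 0 : derive |g| ≤ lam
      subst hx
      have hgl : |g| ≤ lam := by
        by_contra hgl
        push_neg at hgl
        have hc : (0 : ℝ) - g / L ≠ 0 := by
          intro h0
          have : g = 0 := by field_simp at h0; linarith
          rw [this, abs_zero] at hgl; linarith
        have habs : |0 - g / L| = |g| / L := by
          rw [zero_sub, abs_neg, abs_div, abs_of_pos hL]
        have hpos : 0 < |g| / L - lam / L := by
          rw [div_sub_div_same]
          exact div_pos (by linarith) hL
        rw [habs, max_eq_left (le_of_lt hpos)] at h
        rcases lt_trichotomy (0 - g / L) 0 with hc' | hc' | hc'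
        · rw [Real.sign_of_neg hc'] at h; nlinarith
        · exact hc hc'
        · rw [Real.sign_of_pos hc'] at h; nlinarith
      simp only [sub_zero, abs_zero, mul_zero]
      nlinarith [neg_abs_le (g * t), abs_mul g t,
        mul_le_mul_of_nonneg_right hgl (abs_nonneg t)]
    · -- x > 0 : derive g = -lam
      rcases lt_trichotomy (x - g / L) 0 with hc | hc | hc
      · rw [Real.sign_of_neg hc] at h
        have := le_max_right (|x - g / L| - lam / L) 0
        nlinarith
      · rw [hc, Real.sign_zero, zero_mul] at h; linarith
      · rw [Real.sign_of_pos hc, abs_of_pos hc, one_mul] at h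
        have h0 : x - g / L - lam / L = x := by
          rcases le_or_gt (x - g / L - lam / L) 0 with h' | h'
          · rw [max_eq_right h'] at h; linarith
          · rw [max_eq_left (le_of_lt h')] at h; exact h
        have hg : g = -lam := by field_simp at h0; linarith
        rw [hg, abs_of_pos hx]
        nlinarith [le_abs_self t, abs_nonneg t]
  · intro h
    rcases lt_trichotomy x 0 with hx | hx | hx
    · have h1 := h (2 * x)
      have h2 := h 0
      rw [abs_of_neg hx] at h1 h2
      rw [abs_of_neg (by linarith : 2 * x < 0)] at h1
      rw [abs_zero] at h2
      have hg : g = lam := by nlinarith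
      have hc : x - g / L < 0 := by
        rw [hg]
        have : 0 ≤ lam / L := div_nonneg hlam (le_of_lt hL)
        linarith
      rw [Real.sign_of_neg hc, abs_of_neg hc]
      have : -(x - g / L) - lam / L = -x := by rw [hg]; field_simp; ring
      rw [this, max_eq_left (by linarith : (0:ℝ) ≤ -x)]
      ring
    · subst hx
      have h1 := h 1
      have h2 := h (-1)
      simp only [abs_one, abs_neg, abs_zero] at h1 h2
      have hgl : |g| ≤ lam := abs_le.mpr ⟨by linarith, by linarith⟩
      have habs : |0 - g / L| ≤ lam / L := by
        rw [zero_sub, abs_neg, abs_div, abs_of_pos hL]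
        exact (div_le_div_iff_of_pos_right hL).mpr hgl
      rw [max_eq_right (by linarith), mul_zero]
    · have h1 := h (2 * x)
      have h2 := h 0
      rw [abs_of_pos hx] at h1 h2
      rw [abs_of_pos (by linarith : 0 < 2 * x)] at h1
      rw [abs_zero] at h2
      have hg : g = -lam := by nlinarith
      have hc : 0 < x - g / L := by
        have heq : x - g / L = x + lam / L := by rw [hg]; ring
        rw [heq]
        have := div_nonneg hlam (le_of_lt hL)
        linarith
      rw [Real.sign_of_pos hc, abs_of_pos hc, one_mul]
      have : x - g / L - lam / L = x := by rw [hg]; field_simp; ring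
      rw [this, max_eq_left (le_of_lt hx)]

/-- Exchange of summation for the cross term. -/
lemma cross_sum {m n : ℕ} (A : Matrix (Fin m) (Fin n) ℝ) (v : Fin m → ℝ) (w : Fin n → ℝ) :
    ∑ j, v j * ∑ k, A j k * w k = ∑ i, (∑ j, A j i * v j) * w i := by
  simp only [Finset.mul_sum, Finset.sum_mul]
  rw [Finset.sum_comm]
  exact Finset.sum_congr rfl fun i _ => Finset.sum_congr rfl fun j _ => by ring

/-- For `L > 0`, a point `x̂` is a fixed point of the ISTA map
`T(x) = ST(x + (1/L)Aᵀ(y − Ax), λ/L)` if and only if `x̂` is a global minimizer of the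
Lasso objective `P`. -/
theorem ista_fixed_point_iff_minimizer {m n : ℕ} (A : Matrix (Fin m) (Fin n) ℝ)
    (y : Fin m → ℝ) (lam : ℝ) (hlam : 0 ≤ lam) (L : ℝ) (hL : 0 < L)
    (xhat : Fin n → ℝ) :
    istaMap A y lam L xhat = xhat ↔
      ∀ z : Fin n → ℝ, lassoObj A y lam xhat ≤ lassoObj A y lam z := by

  have hL' : L ≠ 0 := ne_of_gt hL
  set g : Fin n → ℝ := A.transpose.mulVec (A.mulVec xhat - y) with hg
  -- rewrite the argument of the soft-threshold
  have harg : ∀ i, (xhat + (1 / L) • A.transpose.mulVec (y - A.mulVec xhat)) i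
      = xhat i - g i / L := by
    intro i
    have hv : A.transpose.mulVec (y - A.mulVec xhat) = -g := by
      rw [hg, ← Matrix.mulVec_neg]
      congr 1
      ext j; simp
    rw [hv]
    simp only [Pi.add_apply, Pi.smul_apply, Pi.neg_apply, smul_eq_mul]
    field_simp
    ring
  have hfix : (istaMap A y lam L xhat = xhat) ↔
      ∀ i, Real.sign (xhat i - g i / L) * max (|xhat i - g i / L| - lam / L) 0 = xhat i := by
    rw [funext_iff]
    unfold istaMap softThreshold
    exact forall_congr' fun i => by rw [harg i]
  -- expansion identity
  have key : ∀ z : Fin n → ℝ, lassoObj A y lam z = lassoObj A y lam xhat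
      + (∑ i, (g i * (z i - xhat i) + lam * |z i| - lam * |xhat i|))
      + (1 / 2) * ∑ j, (A.mulVec z j - A.mulVec xhat j) ^ 2 := by
    intro z
    have cross : ∑ j, (A.mulVec xhat j - y j) * (A.mulVec z j - A.mulVec xhat j)
        = ∑ i, g i * (z i - xhat i) := by
      have h1 : ∀ j, A.mulVec z j - A.mulVec xhat j = ∑ k, A j k * (z k - xhat k) := by
        intro j
        simp only [Matrix.mulVec, dotProduct, ← Finset.sum_sub_distrib]
        exact Finset.sum_congr rfl fun k _ => by ring
      simp only [h1]
      rw [cross_sum A (fun j => A.mulVec xhat j - y j) (fun k => z k - xhat k)]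
      refine Finset.sum_congr rfl fun i _ => ?_
      have hgi : g i = ∑ j, A j i * (A.mulVec xhat j - y j) := by
        simp [hg, Matrix.mulVec, dotProduct, Matrix.transpose_apply, Pi.sub_apply]
      rw [hgi]
    unfold lassoObj
    have hsq : ∑ j, (y j - A.mulVec z j) ^ 2 = ∑ j, ((y j - A.mulVec xhat j) ^ 2
        + 2 * ((A.mulVec xhat j - y j) * (A.mulVec z j - A.mulVec xhat j))
        + (A.mulVec z j - A.mulVec xhat j) ^ 2) := by
      exact Finset.sum_congr rfl fun j _ => by ring
    rw [hsq]
    rw [Finset.sum_add_distrib, Finset.sum_add_distrib, ← Finset.mul_sum, cross]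
    have hsplit : ∑ i, (g i * (z i - xhat i) + lam * |z i| - lam * |xhat i|)
        = (∑ i, g i * (z i - xhat i)) + lam * (∑ i, |z i|) - lam * (∑ i, |xhat i|) := by
      rw [Finset.mul_sum, Finset.mul_sum, ← Finset.sum_add_distrib, ← Finset.sum_sub_distrib]
    rw [hsplit]
    ring
  rw [hfix]
  constructor
  · intro h z
    have h1 : 0 ≤ ∑ i, (g i * (z i - xhat i) + lam * |z i| - lam * |xhat i|) := by
      refine Finset.sum_nonneg fun i _ => ?_
      have := (st_scalar (xhat i) (g i) lam L hlam hL).mp (h i) (z i)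
      linarith
    have h2 : 0 ≤ (1 / 2 : ℝ) * ∑ j, (A.mulVec z j - A.mulVec xhat j) ^ 2 := by
      positivity
    have := key z
    linarith
  · intro hmin i
    rw [st_scalar (xhat i) (g i) lam L hlam hL]
    intro t
    set u : ℝ := t - xhat i with hu
    set K : ℝ := ∑ j, (A j i * u) ^ 2 with hK
    have hK0 : 0 ≤ K := Finset.sum_nonneg fun j _ => sq_nonneg _
    set B : ℝ := g i * u + lam * (|xhat i + u| - |xhat i|) with hB
    have hstep : ∀ ε : ℝ, 0 < ε → ε ≤ 1 → 0 ≤ B + ε * (K / 2) := by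
      intro ε hε hε1
      set z : Fin n → ℝ := Function.update xhat i (xhat i + ε * u) with hz
      have hPz := hmin z
      rw [key z] at hPz
      have hsum : ∑ i', (g i' * (z i' - xhat i') + lam * |z i'| - lam * |xhat i'|)
          = g i * (ε * u) + lam * |xhat i + ε * u| - lam * |xhat i| := by
        rw [Finset.sum_eq_single i]
        · rw [hz, Function.update_self]; ring_nf
        · intro b _ hb
          rw [hz, Function.update_of_ne hb]; ring
        · intro hi; exact absurd (Finset.mem_univ i) hi
      have hmv : ∀ j, A.mulVec z j - A.mulVec xhat j = A j i * (ε * u) := by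
        intro j
        simp only [Matrix.mulVec, dotProduct, ← Finset.sum_sub_distrib]
        rw [Finset.sum_eq_single i]
        · rw [hz, Function.update_self]; ring
        · intro b _ hb
          rw [hz, Function.update_of_ne hb]; ring
        · intro hi; exact absurd (Finset.mem_univ i) hi
      have hquad : ∑ j, (A.mulVec z j - A.mulVec xhat j) ^ 2 = ε ^ 2 * K := by
        rw [hK, Finset.mul_sum]
        exact Finset.sum_congr rfl fun j _ => by rw [hmv j]; ring
      rw [hsum, hquad] at hPz
      -- convexity of abs
      have hconv : |xhat i + ε * u| - |xhat i| ≤ ε * (|xhat i + u| - |xhat i|) := by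
        have heq : xhat i + ε * u = (1 - ε) * xhat i + ε * (xhat i + u) := by ring
        have := abs_add_le ((1 - ε) * xhat i) (ε * (xhat i + u))
        rw [← heq, abs_mul, abs_mul, abs_of_nonneg (by linarith : (0:ℝ) ≤ 1 - ε),
          abs_of_pos hε] at this
        nlinarith
      have hconv' : lam * |xhat i + ε * u| - lam * |xhat i|
          ≤ ε * (lam * (|xhat i + u| - |xhat i|)) := by
        nlinarith [mul_le_mul_of_nonneg_left hconv hlam]
      have h0 : 0 ≤ ε * B + ε ^ 2 * (K / 2) := by
        rw [hB]
        nlinarith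
      have h1 : 0 ≤ ε * (B + ε * (K / 2)) := by nlinarith
      nlinarith [mul_pos hε hε]
    -- pass to the limit ε → 0
    have hB0 : 0 ≤ B := by
      by_contra hBneg
      push_neg at hBneg
      set ε₀ : ℝ := min 1 (-B / (K + 1)) with hε₀
      have hε₀pos : 0 < ε₀ := lt_min one_pos (div_pos (by linarith) (by linarith))
      have hε₀1 : ε₀ ≤ 1 := min_le_left _ _
      have h2 : ε₀ ≤ -B / (K + 1) := min_le_right _ _
      have h3 : ε₀ * (K + 1) ≤ -B := (le_div_iff₀ (by linarith)).mp h2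
      have h4 := hstep ε₀ hε₀pos hε₀1
      nlinarith [mul_nonneg (le_of_lt hε₀pos) hK0]
    have ht : xhat i + u = t := by rw [hu]; ring
    rw [hB, ht] at hB0
    linarith
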